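/- Let G : E × ℝ → E be differentiable (jointly, in the Fréchet sense), let μ > 0 and ρ ≥ 0, and suppose: for each t, the map x ↦ G (x, t) is μ-strongly monotone, i.e. ⟪G (x, t) − G (y, t), x − y⟫ ≥ μ·‖x − y‖² for all x, y ∈ E; the partial derivative of G in its time variable satisfies ‖∂_t G (x, t)‖ ≤ ρ for all x ∈ E and t ∈ ℝ; and x* : ℝ → E is differentiable with G (x* t, t) = 0 for all t. Then ‖deriv x* t‖ ≤ ρ/μ for every t; that is, the optimizer trajectory of a time-varying strongly convex problem moves with speed at most ρ/μ. -/

import Mathlib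

open RealInnerProductSpace

theorem stmt_17 {n : ℕ}
    (G : EuclideanSpace ℝ (Fin n) × ℝ → EuclideanSpace ℝ (Fin n))
    (hG : Differentiable ℝ G)
    (μ ρ : ℝ) (hμ : 0 < μ) (hρ : 0 ≤ ρ)
    (hmono : ∀ t : ℝ, ∀ x y : EuclideanSpace ℝ (Fin n),
      ⟪G (x, t) - G (y, t), x - y⟫ ≥ μ * ‖x - y‖ ^ 2)
    (hpartial : ∀ x : EuclideanSpace ℝ (Fin n), ∀ t : ℝ,
      ‖fderiv ℝ G (x, t) (0, 1)‖ ≤ ρ)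
    (xs : ℝ → EuclideanSpace ℝ (Fin n)) (hxs : Differentiable ℝ xs)
    (hzero : ∀ t : ℝ, G (xs t, t) = 0) :
    ∀ t : ℝ, ‖deriv xs t‖ ≤ ρ / μ := by
  intro t
  set v := deriv xs t with hv
  set x := xs t with hx
  set A := fderiv ℝ G (x, t) with hA
  -- chain rule: A (v, 1) = 0
  have hh : HasDerivAt (fun s => (xs s, s)) (v, (1:ℝ)) t :=
    ((hxs t).hasDerivAt.prodMk (hasDerivAt_id t))
  have hcomp : HasDerivAt (fun s => G (xs s, s)) (A (v, 1)) t := by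
    have := (hG _).hasFDerivAt.comp_hasDerivAt t hh
    exact this
  have hconst : HasDerivAt (fun s => G (xs s, s)) 0 t := by
    have : (fun s => G (xs s, s)) = fun _ => (0 : EuclideanSpace ℝ (Fin n)) := by
      funext s; exact hzero s
    rw [this]; exact hasDerivAt_const t 0
  have hA1 : A (v, 1) = 0 := hcomp.unique hconst
  have hsplit : A (v, 0) = - A (0, 1) := by
    have h2 : A (v, 0) + A (0, 1) = A (v, 1) := by
      rw [← A.map_add]; norm_num
    rw [hA1] at h2
    exact eq_neg_of_add_eq_zero_left h2
  -- directional derivative of x ↦ G (x, t) along v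
  have hg : HasDerivAt (fun s : ℝ => G (x + s • v, t)) (A (v, 0)) 0 := by
    have hpath : HasDerivAt (fun s : ℝ => ((x + s • v, t) : EuclideanSpace ℝ (Fin n) × ℝ))
        (v, (0:ℝ)) 0 := by
      have h1 : HasDerivAt (fun s : ℝ => x + s • v) v 0 := by
        simpa using ((hasDerivAt_id (0:ℝ)).smul_const v).const_add x
      exact h1.prodMk (hasDerivAt_const 0 t)
    have := (hG (x + (0:ℝ) • v, t)).hasFDerivAt.comp_hasDerivAt 0 hpath
    simpa [Function.comp_def] using this
  -- f s = ⟪G (x + s v, t), v⟫ has derivative ⟪A (v,0), v⟫ at 0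
  have hf : HasDerivAt (fun s : ℝ => ⟪G (x + s • v, t), v⟫) ⟪A (v, 0), v⟫ 0 := by
    have := (hg.inner ℝ (hasDerivAt_const (0:ℝ) v))
    simpa using this
  -- slope bound from strong monotonicity
  have key : μ * ‖v‖ ^ 2 ≤ ⟪A (v, 0), v⟫ := by
    have hslope : Filter.Tendsto (slope (fun s : ℝ => ⟪G (x + s • v, t), v⟫) 0)
        (nhdsWithin 0 {(0:ℝ)}ᶜ) (nhds ⟪A (v, 0), v⟫) :=
      hasDerivAt_iff_tendsto_slope.mp hf
    have hslope' : Filter.Tendsto (slope (fun s : ℝ => ⟪G (x + s • v, t), v⟫) 0)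
        (nhdsWithin 0 (Set.Ioi 0)) (nhds ⟪A (v, 0), v⟫) :=
      hslope.mono_left (nhdsWithin_mono 0 (by intro s hs; exact ne_of_gt hs))
    refine ge_of_tendsto hslope' ?_
    filter_upwards [self_mem_nhdsWithin] with s hs
    have hs0 : (0:ℝ) < s := hs
    have hm := hmono t (x + s • v) x
    have hdiff : (x + s • v) - x = s • v := by abel
    rw [hdiff] at hm
    have hinner : ⟪G (x + s • v, t) - G (x, t), s • v⟫
        = s * (⟪G (x + s • v, t), v⟫ - ⟪G (x, t), v⟫) := by
      rw [inner_sub_left, real_inner_smul_right, real_inner_smul_right]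
      ring
    rw [hinner, norm_smul] at hm
    have hnorm : (‖s‖ * ‖v‖) ^ 2 = s ^ 2 * ‖v‖ ^ 2 := by
      rw [mul_pow, Real.norm_eq_abs, sq_abs]
    rw [hnorm] at hm
    have hsl : slope (fun s : ℝ => ⟪G (x + s • v, t), v⟫) 0 s
        = (⟪G (x + s • v, t), v⟫ - ⟪G (x, t), v⟫) / s := by
      simp [slope_def_field]
    rw [hsl, le_div_iff₀ hs0]
    nlinarith
  -- combine
  have hbound : μ * ‖v‖ ^ 2 ≤ ρ * ‖v‖ := by
    calc μ * ‖v‖ ^ 2 ≤ ⟪A (v, 0), v⟫ := key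
      _ = ⟪-A (0, 1), v⟫ := by rw [hsplit]
      _ ≤ ‖-A (0, 1)‖ * ‖v‖ := real_inner_le_norm _ _
      _ = ‖A (0, 1)‖ * ‖v‖ := by rw [norm_neg]
      _ ≤ ρ * ‖v‖ := by
          have := hpartial x t
          exact mul_le_mul_of_nonneg_right (by rw [hA]; exact this) (norm_nonneg v)
  rcases eq_or_lt_of_le (norm_nonneg v) with h0 | h0
  · rw [← h0]; positivity
  · rw [le_div_iff₀ hμ]
    have : μ * ‖v‖ * ‖v‖ ≤ ρ * ‖v‖ := by nlinarith
    nlinarith
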